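/- Let W be a complex vector space, k ≥ 1, E a globally generated homogeneous vector bundle on G(k, W), and K = ker(H⁰(E) ⊗ O → E). Let s̄ ∈ H⁰(E) ⊗ (∧^k W)* be a general element, s ∈ H⁰(E(1)) its image under multiplication, Z ⊂ G(k,W) the zero locus of s, Σ ⊂ ℙ(H⁰(E) ⊕ ∧^k W) the image of ℙ_{G(k,W)}(K ⊕ O(-1)), and P_{s̄} the linear subspace {[(s̄(p), p)] : p ∈ ∧^k W}. Then Z ⊂ ℙ(∧^k W) (via the Plücker embedding) and Z' = Σ ∩ P_{s̄} ⊂ P_{s̄} are projectively equivalent. -/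

import Mathlib

open LinearAlgebra.Projectivization
open scoped LinearAlgebra.Projectivization

/-- Abstract form of Ito–Inoue–Miura's Proposition on `Z_{E(1)}`: let `A = ∧^k W` be the
ambient space of the Plücker embedding of `G = G(k, W) ⊆ ℙ(A)`, let `V₀ = H⁰(E)` for a
globally generated bundle `E` with kernel fibers `K_x = ker(H⁰(E) → E_x) ⊆ V₀`, and let
`s̄ : A → V₀` be a (general) element of `H⁰(E) ⊗ (∧^k W)*`.  The induced section
`s ∈ H⁰(E(1))` vanishes at `x = [p] ∈ G` iff `s̄(p) ∈ K_x`, giving the zero locus `Z`;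
`Σ` is the image of `ℙ_G(K ⊕ O(-1))`, i.e. the set of points `[(v, t·p)]` with `[p] ∈ G`,
`v ∈ K_{[p]}`; and `P_{s̄} = {[(s̄(p), p)]}` is the image of the linear embedding
`p ↦ (s̄(p), p)`.  Then this embedding restricts to a bijection (a projective equivalence)
from `Z ⊆ ℙ(A)` onto `Z' = Σ ∩ P_{s̄}`. -/
theorem zero_locus_projectively_equivalent_linear_section
    (A V₀ : Type*) [AddCommGroup A] [Module ℂ A] [AddCommGroup V₀] [Module ℂ V₀]
    (G : Set (ℙ ℂ A)) (K : ℙ ℂ A → Submodule ℂ V₀) (sbar : A →ₗ[ℂ] V₀)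
    (hinj : Function.Injective (sbar.prod (LinearMap.id : A →ₗ[ℂ] A))) :
    Set.BijOn (Projectivization.map (sbar.prod LinearMap.id) hinj)
      {x : ℙ ℂ A | x ∈ G ∧ sbar x.rep ∈ K x}
      ({y : ℙ ℂ (V₀ × A) |
          ∃ (v : V₀) (t : ℂ) (p : A) (hp : p ≠ 0) (h : (v, t • p) ≠ 0),
            Projectivization.mk ℂ p hp ∈ G ∧ v ∈ K (Projectivization.mk ℂ p hp) ∧
            y = Projectivization.mk ℂ (v, t • p) h}
        ∩ Set.range (Projectivization.map (sbar.prod LinearMap.id) hinj)) := by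
  refine ⟨?_, fun a _ b _ h => Projectivization.map_injective _ hinj h, ?_⟩
  · rintro x ⟨hxG, hxK⟩
    constructor
    · have hrep : ((sbar.prod LinearMap.id) x.rep : V₀ × A) = (sbar x.rep, x.rep) := rfl
      refine ⟨sbar x.rep, 1, x.rep, x.rep_nonzero, ?_, ?_, ?_, ?_⟩
      · simp only [one_smul]
        intro h
        exact x.rep_nonzero (congrArg Prod.snd h)
      · rw [Projectivization.mk_rep]; exact hxG
      · rw [Projectivization.mk_rep]; exact hxK
      · conv_lhs => rw [← Projectivization.mk_rep x]
        rw [Projectivization.map_mk]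
        congr 1
        simp [hrep]
    · exact ⟨x, rfl⟩
  · rintro y ⟨⟨v, t, p, hp, h, hpG, hvK, hy⟩, ⟨x, rfl⟩⟩
    refine ⟨x, ?_, rfl⟩
    -- x maps to mk (v, t•p), so (sbar x.rep, x.rep) = c • (v, t•p)
    have hx : Projectivization.map (sbar.prod LinearMap.id) hinj x
        = Projectivization.mk ℂ (v, t • p) h := hy
    have hrepnz : x.rep ≠ 0 := x.rep_nonzero
    have himg : ((sbar.prod LinearMap.id) x.rep : V₀ × A) ≠ 0 := by
      intro h0
      exact hrepnz (hinj (by simpa using h0))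
    have hx2 : Projectivization.mk ℂ ((sbar.prod LinearMap.id) x.rep) himg
        = Projectivization.mk ℂ (v, t • p) h := by
      rw [← Projectivization.map_mk (sbar.prod LinearMap.id) hinj x.rep hrepnz,
        Projectivization.mk_rep]
      exact hx
    obtain ⟨c, hc⟩ := (Projectivization.mk_eq_mk_iff ℂ _ _ himg h).1 hx2
    have hc1 : sbar x.rep = (c : ℂ) • v := by
      have := congrArg Prod.fst hc
      simpa [Prod.smul_def, Units.smul_def] using this.symm
    have hc2 : x.rep = (c : ℂ) • t • p := by
      have := congrArg Prod.snd hc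
      simpa [Prod.smul_def, Units.smul_def] using this.symm
    have hct : (c : ℂ) * t ≠ 0 := by
      intro h0
      apply hrepnz
      rw [hc2, smul_smul, h0, zero_smul]
    have hxeq : x = Projectivization.mk ℂ p hp := by
      rw [← Projectivization.mk_rep x]
      rw [Projectivization.mk_eq_mk_iff']
      exact ⟨(c : ℂ) * t, by rw [mul_smul]; exact hc2.symm⟩
    constructor
    · rw [hxeq]; exact hpG
    · rw [hc1, hxeq]
      exact Submodule.smul_mem _ _ hvK
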